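/- Let a, b, c, d lie in positive order on the unit circle, with a + c ≠ 0, b + d ≠ 0, ab ≠ cd, ad ≠ bc, and set w1 := (ab(c+d) − cd(a+b))/(ab − cd) and w3 := (ad(b+c) − bc(a+d))/(ad − bc), with w1 ≠ w3. Let w ∈ ℂ with |w| < 1 satisfy |w − 2ac/(a+c)| = |a − 2ac/(a+c)| and |w − 2bd/(b+d)| = |b − 2bd/(b+d)| (w is the point of intersection of the hyperbolic lines J*[a,c] and J*[b,d]). Then for every z ∈ ℂ: |z − w|² = |z|² − 1 if and only if z, w1 and w3 are collinear (over ℝ, viewing ℂ as the real plane). Equivalently, the circle orthogonal to the unit circle centered at z (of radius √(|z|² − 1)) passes through w if and only if z lies on the euclidean line through w1 and w3. -/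

import Mathlib

open Complex

/-- Points `a, b, c, d` lie in positive order on the unit circle. -/
def PosOrderOnCircle (a b c d : ℂ) : Prop :=
  ∃ θ₁ θ₂ θ₃ θ₄ : ℝ, θ₁ < θ₂ ∧ θ₂ < θ₃ ∧ θ₃ < θ₄ ∧ θ₄ < θ₁ + 2 * Real.pi ∧
    a = Complex.exp (θ₁ * Complex.I) ∧ b = Complex.exp (θ₂ * Complex.I) ∧
    c = Complex.exp (θ₃ * Complex.I) ∧ d = Complex.exp (θ₄ * Complex.I)

private lemma exp_ne_exp' {θ θ' : ℝ} (h : θ < θ') (h2 : θ' < θ + 2 * Real.pi) :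
    Complex.exp (θ * Complex.I) ≠ Complex.exp (θ' * Complex.I) := by
  intro hE
  rw [Complex.exp_eq_exp_iff_exists_int] at hE
  obtain ⟨n, hn⟩ := hE
  have him := congrArg Complex.im hn
  simp [Complex.add_im, Complex.mul_im] at him
  have hn0 : (n : ℝ) < 0 := by nlinarith [Real.pi_pos]
  have hn1 : (-1 : ℝ) < (n : ℝ) := by nlinarith [Real.pi_pos]
  have hz0 : n < 0 := by exact_mod_cast hn0
  have hz1 : (-1 : ℤ) < n := by exact_mod_cast hn1
  omega

private lemma collinear_triple_iff' {u v : ℂ} (h : u ≠ v) (z : ℂ) :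
    Collinear ℝ ({z, u, v} : Set ℂ) ↔ ∃ t : ℝ, z = u + (t : ℂ) * (v - u) := by
  rw [collinear_iff_of_mem (Set.mem_insert_of_mem _ (Set.mem_insert u {v}))]
  constructor
  · rintro ⟨v₀, hv⟩
    obtain ⟨r, hr⟩ := hv z (Set.mem_insert _ _)
    obtain ⟨s, hs⟩ := hv v (by simp)
    have hs0 : s ≠ 0 := by
      rintro rfl
      simp at hs
      exact h hs.symm
    refine ⟨r / s, ?_⟩
    have hv' : v - u = (s : ℂ) * v₀ := by
      rw [hs]; simp [Complex.real_smul]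
    have key : ((r / s : ℝ) : ℂ) * (v - u) = (r : ℂ) * v₀ := by
      have hsc : (s : ℂ) ≠ 0 := by exact_mod_cast hs0
      rw [hv']; push_cast
      field_simp
    rw [hr, key]
    simp [Complex.real_smul, add_comm]
  · rintro ⟨t, ht⟩
    refine ⟨v - u, ?_⟩
    rintro p (rfl | rfl | rfl)
    · exact ⟨t, by rw [ht]; simp [Complex.real_smul]; ring⟩
    · exact ⟨0, by simp⟩
    · exact ⟨1, by simp⟩

private lemma E_line' {w p q u : ℂ} (hpq : p ≠ q)
    (hEp : 2 * (p * (starRingEnd ℂ) w).re = Complex.normSq w + 1)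
    (hEq : 2 * (q * (starRingEnd ℂ) w).re = Complex.normSq w + 1)
    (hI : (u - p) * (starRingEnd ℂ) (q - p) = (starRingEnd ℂ) (u - p) * (q - p)) :
    2 * (u * (starRingEnd ℂ) w).re = Complex.normSq w + 1 := by
  have hqp : q - p ≠ 0 := sub_ne_zero.mpr (Ne.symm hpq)
  have hqpc : (starRingEnd ℂ) (q - p) ≠ 0 := fun h0 =>
    hqp (by simpa using congrArg (starRingEnd ℂ) h0)
  set t : ℂ := (u - p) / (q - p) with ht
  have htr : (starRingEnd ℂ) t = t := by
    rw [ht, map_div₀, div_eq_div_iff hqpc hqp]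
    linear_combination -hI
  have hu : u = p + t * (q - p) := by
    rw [ht]; field_simp; ring
  have htre : t = (t.re : ℂ) := (Complex.conj_eq_iff_re.mp htr).symm
  have hexp : u * (starRingEnd ℂ) w
      = p * (starRingEnd ℂ) w + (t.re : ℂ) * ((q - p) * (starRingEnd ℂ) w) := by
    rw [hu, ← htre]; ring
  have hsub : ((q - p) * (starRingEnd ℂ) w).re
      = (q * (starRingEnd ℂ) w).re - (p * (starRingEnd ℂ) w).re := by
    rw [sub_mul, Complex.sub_re]
  have hzero : ((q - p) * (starRingEnd ℂ) w).re = 0 := by rw [hsub]; linarith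
  rw [hexp, Complex.add_re, Complex.re_ofReal_mul, hzero, mul_zero]
  linarith

private lemma perp_decomp' {w x : ℂ} (hw : w ≠ 0) (h : (x * (starRingEnd ℂ) w).re = 0) :
    x = (((x * (starRingEnd ℂ) w).im / Complex.normSq w : ℝ) : ℂ) * (Complex.I * w) := by
  have h1 : x * (starRingEnd ℂ) w = ((x * (starRingEnd ℂ) w).im : ℂ) * Complex.I := by
    rw [← Complex.re_add_im (x * (starRingEnd ℂ) w), h]
    simp
  have hns : Complex.normSq w ≠ 0 := by
    simpa [Complex.normSq_eq_zero] using hw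
  have hnsc : ((Complex.normSq w : ℝ) : ℂ) ≠ 0 := by exact_mod_cast hns
  have h2 : x * ((Complex.normSq w : ℝ) : ℂ)
      = ((x * (starRingEnd ℂ) w).im : ℂ) * (Complex.I * w) := by
    calc x * ((Complex.normSq w : ℝ) : ℂ) = x * ((starRingEnd ℂ) w * w) := by
          rw [mul_comm ((starRingEnd ℂ) w) w, Complex.mul_conj]
      _ = (x * (starRingEnd ℂ) w) * w := by ring
      _ = ((x * (starRingEnd ℂ) w).im : ℂ) * (Complex.I * w) := by
          conv_lhs => rw [h1]
          ring
  push_cast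
  rw [div_mul_eq_mul_div, eq_div_iff hnsc]
  linear_combination h2

set_option maxHeartbeats 2000000 in
/-- A circle orthogonal to the unit circle passes through the intersection point `w`
of the hyperbolic lines `J*[a,c]` and `J*[b,d]` iff its center lies on the line
through `w1 = LIS[a,b,c,d]` and `w3 = LIS[a,d,b,c]`. -/
theorem orthogonal_circle_through_w_iff_center_on_line (a b c d w : ℂ)
    (hord : PosOrderOnCircle a b c d)
    (hac : a + c ≠ 0) (hbd : b + d ≠ 0)
    (h1 : a * b ≠ c * d) (h3 : a * d ≠ b * c)
    (hw : ‖w‖ < 1)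
    (hw1 : ‖w - 2 * a * c / (a + c)‖ = ‖a - 2 * a * c / (a + c)‖)
    (hw2 : ‖w - 2 * b * d / (b + d)‖ = ‖b - 2 * b * d / (b + d)‖)
    (hww : (a * b * (c + d) - c * d * (a + b)) / (a * b - c * d) ≠
      (a * d * (b + c) - b * c * (a + d)) / (a * d - b * c)) :
    let w1 := (a * b * (c + d) - c * d * (a + b)) / (a * b - c * d)
    let w3 := (a * d * (b + c) - b * c * (a + d)) / (a * d - b * c)
    ∀ z : ℂ, ‖z - w‖ ^ 2 = ‖z‖ ^ 2 - 1 ↔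
      Collinear ℝ ({z, w1, w3} : Set ℂ) := by
  obtain ⟨θ₁, θ₂, θ₃, θ₄, h12, h23, h34, h41, ha, hb, hc, hd⟩ := hord
  have hna : Complex.normSq a = 1 := by
    rw [ha, Complex.normSq_eq_norm_sq, Complex.norm_exp_ofReal_mul_I]; norm_num
  have hnb : Complex.normSq b = 1 := by
    rw [hb, Complex.normSq_eq_norm_sq, Complex.norm_exp_ofReal_mul_I]; norm_num
  have hnc : Complex.normSq c = 1 := by
    rw [hc, Complex.normSq_eq_norm_sq, Complex.norm_exp_ofReal_mul_I]; norm_num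
  have hnd : Complex.normSq d = 1 := by
    rw [hd, Complex.normSq_eq_norm_sq, Complex.norm_exp_ofReal_mul_I]; norm_num
  have hab : a ≠ b := by rw [ha, hb]; exact exp_ne_exp' h12 (by linarith)
  have had : a ≠ d := by rw [ha, hd]; exact exp_ne_exp' (by linarith) h41
  have ha0 : a ≠ 0 := fun h => by simp [h] at hna
  have hb0 : b ≠ 0 := fun h => by simp [h] at hnb
  have hc0 : c ≠ 0 := fun h => by simp [h] at hnc
  have hd0 : d ≠ 0 := fun h => by simp [h] at hnd
  have hmc : ∀ x : ℂ, Complex.normSq x = 1 → (starRingEnd ℂ) x = x⁻¹ := by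
    intro x hx
    have hx1 : x * (starRingEnd ℂ) x = 1 := by
      rw [Complex.mul_conj, hx]; norm_num
    exact (inv_eq_of_mul_eq_one_right hx1).symm
  have hca := hmc a hna
  have hcb := hmc b hnb
  have hcc := hmc c hnc
  have hcd := hmc d hnd
  have hcne : ∀ x : ℂ, x ≠ 0 → (starRingEnd ℂ) x ≠ 0 := fun x hx h0 =>
    hx (by simpa using congrArg (starRingEnd ℂ) h0)
  have hd1 : a * b - c * d ≠ 0 := sub_ne_zero.mpr h1
  have hd3 : a * d - b * c ≠ 0 := sub_ne_zero.mpr h3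
  set p : ℂ := 2 * a * c / (a + c) with hp
  set q : ℂ := 2 * b * d / (b + d) with hq
  intro w1 w3
  have e1 : w1 = (a * b * (c + d) - c * d * (a + b)) / (a * b - c * d) := rfl
  have e3 : w3 = (a * d * (b + c) - b * c * (a + d)) / (a * d - b * c) := rfl
  have hne : w1 ≠ w3 := hww
  -- conjugates
  have hcp : (starRingEnd ℂ) p = 2 / (a + c) := by
    have hden : a⁻¹ + c⁻¹ ≠ 0 := by
      rw [← hca, ← hcc, ← map_add]; exact hcne _ hac
    rw [hp, map_div₀, map_mul, map_mul, map_add, hca, hcc, Complex.conj_ofNat,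
      div_eq_div_iff hden hac]
    field_simp
    ring
  have hcq : (starRingEnd ℂ) q = 2 / (b + d) := by
    have hden : b⁻¹ + d⁻¹ ≠ 0 := by
      rw [← hcb, ← hcd, ← map_add]; exact hcne _ hbd
    rw [hq, map_div₀, map_mul, map_mul, map_add, hcb, hcd, Complex.conj_ofNat,
      div_eq_div_iff hden hbd]
    field_simp
    ring
  have hcw1 : (starRingEnd ℂ) w1 = (a + b - c - d) / (a * b - c * d) := by
    have hden : a⁻¹ * b⁻¹ - c⁻¹ * d⁻¹ ≠ 0 := by
      rw [← hca, ← hcb, ← hcc, ← hcd, ← map_mul, ← map_mul, ← map_sub]; exact hcne _ hd1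
    rw [e1]
    simp only [map_div₀, map_sub, map_add, map_mul, hca, hcb, hcc, hcd]
    rw [div_eq_div_iff hden hd1]
    field_simp
    ring
  have hcw3 : (starRingEnd ℂ) w3 = (a + d - b - c) / (a * d - b * c) := by
    have hden : a⁻¹ * d⁻¹ - b⁻¹ * c⁻¹ ≠ 0 := by
      rw [← hca, ← hcb, ← hcc, ← hcd, ← map_mul, ← map_mul, ← map_sub]; exact hcne _ hd3
    rw [e3]
    simp only [map_div₀, map_sub, map_add, map_mul, hca, hcb, hcc, hcd]
    rw [div_eq_div_iff hden hd3]
    field_simp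
    ring
  -- real-part facts
  have hrea : (a * (starRingEnd ℂ) p).re = 1 := by
    have h2 : a * (starRingEnd ℂ) p + (starRingEnd ℂ) (a * (starRingEnd ℂ) p) = 2 := by
      rw [map_mul, Complex.conj_conj, hca, hcp, hp]
      field_simp
    have h3' : ((2 * (a * (starRingEnd ℂ) p).re : ℝ) : ℂ) = 2 := by
      rw [← Complex.add_conj]; exact h2
    have h4 : 2 * (a * (starRingEnd ℂ) p).re = 2 := by exact_mod_cast h3'
    linarith
  have hreb : (b * (starRingEnd ℂ) q).re = 1 := by
    have h2 : b * (starRingEnd ℂ) q + (starRingEnd ℂ) (b * (starRingEnd ℂ) q) = 2 := by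
      rw [map_mul, Complex.conj_conj, hcb, hcq, hq]
      field_simp
    have h3' : ((2 * (b * (starRingEnd ℂ) q).re : ℝ) : ℂ) = 2 := by
      rw [← Complex.add_conj]; exact h2
    have h4 : 2 * (b * (starRingEnd ℂ) q).re = 2 := by exact_mod_cast h3'
    linarith
  have hswap : ∀ x y : ℂ, (x * (starRingEnd ℂ) y).re = (y * (starRingEnd ℂ) x).re := by
    intro x y
    simp [Complex.mul_re]
    ring
  have hEp : 2 * (p * (starRingEnd ℂ) w).re = Complex.normSq w + 1 := by
    have h2 : Complex.normSq (w - p) = Complex.normSq (a - p) := by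
      rw [← Complex.sq_norm, ← Complex.sq_norm, hw1]
    rw [Complex.normSq_sub, Complex.normSq_sub, hna, hrea, hswap w p] at h2
    linarith
  have hEq : 2 * (q * (starRingEnd ℂ) w).re = Complex.normSq w + 1 := by
    have h2 : Complex.normSq (w - q) = Complex.normSq (b - q) := by
      rw [← Complex.sq_norm, ← Complex.sq_norm, hw2]
    rw [Complex.normSq_sub, Complex.normSq_sub, hnb, hreb, hswap w q] at h2
    linarith
  have hw0 : w ≠ 0 := by
    intro h
    rw [h] at hEp
    simp at hEp
  have hpq : p ≠ q := by
    intro hpq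
    have h6 : 2 / (a + c) = 2 / (b + d) := by rw [← hcp, ← hcq, hpq]
    have h5 : a + c = b + d := by
      rw [div_eq_div_iff hac hbd] at h6
      linear_combination -h6 / 2
    have h8 := hpq
    rw [hp, hq, ← h5] at h8
    rw [div_eq_div_iff hac hac] at h8
    have h7 : a * c = b * d := by
      have hx : (2 * a * c - 2 * b * d) * (a + c) = 0 := by linear_combination h8
      rcases mul_eq_zero.mp hx with h | h
      · linear_combination h / 2
      · exact absurd h hac
    have h9 : (a - b) * (a - d) = 0 := by linear_combination a * h5 - h7
    rcases mul_eq_zero.mp h9 with h | h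
    · exact hab (sub_eq_zero.mp h)
    · exact had (sub_eq_zero.mp h)
  -- the points w1 and w3 lie on the line through p and q
  have hI1 : (w1 - p) * (starRingEnd ℂ) (q - p)
      = (starRingEnd ℂ) (w1 - p) * (q - p) := by
    simp only [map_sub, hcw1, hcp, hcq]
    rw [e1, hp, hq]
    field_simp
    ring
  have hI3 : (w3 - p) * (starRingEnd ℂ) (q - p)
      = (starRingEnd ℂ) (w3 - p) * (q - p) := by
    simp only [map_sub, hcw3, hcp, hcq]
    rw [e3, hp, hq]
    field_simp
    ring
  have hEw1 := E_line' hpq hEp hEq hI1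
  have hEw3 := E_line' hpq hEp hEq hI3
  intro z
  have habs_iff : ‖z - w‖ ^ 2 = ‖z‖ ^ 2 - 1 ↔
      2 * (z * (starRingEnd ℂ) w).re = Complex.normSq w + 1 := by
    rw [Complex.sq_norm, Complex.sq_norm, Complex.normSq_sub]
    constructor <;> intro hh <;> linarith
  rw [habs_iff, collinear_triple_iff' hne z]
  constructor
  · intro hEz
    have hz1 : ((z - w1) * (starRingEnd ℂ) w).re = 0 := by
      rw [sub_mul, Complex.sub_re]; linarith
    have h31 : ((w3 - w1) * (starRingEnd ℂ) w).re = 0 := by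
      rw [sub_mul, Complex.sub_re]; linarith
    have hz1' := perp_decomp' hw0 hz1
    have h31' := perp_decomp' hw0 h31
    set m1 : ℝ := ((z - w1) * (starRingEnd ℂ) w).im / Complex.normSq w with hm1
    set m3 : ℝ := ((w3 - w1) * (starRingEnd ℂ) w).im / Complex.normSq w with hm3
    have hIw : Complex.I * w ≠ 0 := mul_ne_zero Complex.I_ne_zero hw0
    have hm30 : m3 ≠ 0 := by
      intro h
      rw [h] at h31'
      simp at h31'
      exact hne (by linear_combination -h31')
    refine ⟨m1 / m3, ?_⟩
    have hm3c : (m3 : ℂ) ≠ 0 := by exact_mod_cast hm30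
    have hkey : ((m1 / m3 : ℝ) : ℂ) * (w3 - w1) = z - w1 := by
      rw [h31', hz1']
      push_cast
      field_simp
    linear_combination -hkey
  · rintro ⟨t, ht⟩
    have hexp : z * (starRingEnd ℂ) w = w1 * (starRingEnd ℂ) w
        + (t : ℂ) * ((w3 - w1) * (starRingEnd ℂ) w) := by
      rw [ht]; ring
    rw [hexp, Complex.add_re, Complex.re_ofReal_mul, sub_mul, Complex.sub_re]
    have : (w3 * (starRingEnd ℂ) w).re - (w1 * (starRingEnd ℂ) w).re = 0 := by linarith
    rw [this, mul_zero]
    linarith
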